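/- Let Ω ⊂ ℝⁿ be a proper convex domain and m ≥ 1. Then the tube T_Ω = {z ∈ ℂⁿ : Re z ∈ Ω} is locally m-convex (as a domain in ℂⁿ = ℝ^{2n} with the complex-line distance function) if and only if Ω is locally m-convex (as a domain in ℝⁿ with the real-line distance function). -/

import Mathlib

open Set Metric

noncomputable section

/-- Distance to the complement, real case. -/
def deltaR {n : ℕ} (Ω : Set (EuclideanSpace ℝ (Fin n)))
    (p : EuclideanSpace ℝ (Fin n)) : ℝ :=
  Metric.infDist p Ωᶜ

/-- Distance to the complement along the real line through `p` in direction `v`. -/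
def deltaRLine {n : ℕ} (Ω : Set (EuclideanSpace ℝ (Fin n)))
    (p v : EuclideanSpace ℝ (Fin n)) : ℝ :=
  sInf {d | ∃ t : ℝ, p + t • v ∉ Ω ∧ d = ‖t • v‖}

/-- `Ω ⊆ ℝⁿ` is locally `m`-convex. -/
def LocallyMConvexR {n : ℕ} (Ω : Set (EuclideanSpace ℝ (Fin n))) (m : ℝ) : Prop :=
  ∀ R > (0:ℝ), ∃ C > (0:ℝ), ∀ p ∈ Ω, ‖p‖ < R →
    ∀ v : EuclideanSpace ℝ (Fin n), v ≠ 0 →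
      deltaRLine Ω p v ≤ C * (deltaR Ω p) ^ (1 / m)

/-- Distance to the complement, complex case. -/
def deltaC {n : ℕ} (D : Set (EuclideanSpace ℂ (Fin n)))
    (p : EuclideanSpace ℂ (Fin n)) : ℝ :=
  Metric.infDist p Dᶜ

/-- Distance to the complement along the complex line through `p` in direction `v`. -/
def deltaCLine {n : ℕ} (D : Set (EuclideanSpace ℂ (Fin n)))
    (p v : EuclideanSpace ℂ (Fin n)) : ℝ :=
  sInf {d | ∃ t : ℂ, p + t • v ∉ D ∧ d = ‖t • v‖}

/-- `D ⊆ ℂⁿ` is locally `m`-convex. -/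
def LocallyMConvexC {n : ℕ} (D : Set (EuclideanSpace ℂ (Fin n))) (m : ℝ) : Prop :=
  ∀ R > (0:ℝ), ∃ C > (0:ℝ), ∀ p ∈ D, ‖p‖ < R →
    ∀ v : EuclideanSpace ℂ (Fin n), v ≠ 0 →
      deltaCLine D p v ≤ C * (deltaC D p) ^ (1 / m)

/-- The tube domain over `Ω ⊆ ℝⁿ`. -/
def Tube {n : ℕ} (Ω : Set (EuclideanSpace ℝ (Fin n))) :
    Set (EuclideanSpace ℂ (Fin n)) :=
  {z | WithLp.toLp 2 (fun i => (z i).re) ∈ Ω}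

namespace Stmt18Aux

variable {n : ℕ}

/-- Real part, coordinatewise. -/
def reP (z : EuclideanSpace ℂ (Fin n)) : EuclideanSpace ℝ (Fin n) := WithLp.toLp 2 (fun i => (z i).re)

/-- Imaginary part, coordinatewise. -/
def imP (z : EuclideanSpace ℂ (Fin n)) : EuclideanSpace ℝ (Fin n) := WithLp.toLp 2 (fun i => (z i).im)

/-- Assemble a complex vector from real and imaginary parts. -/
def mkP (x y : EuclideanSpace ℝ (Fin n)) : EuclideanSpace ℂ (Fin n) := WithLp.toLp 2 (fun i => (⟨x i, y i⟩ : ℂ))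

lemma mem_tube {Ω : Set (EuclideanSpace ℝ (Fin n))} {z : EuclideanSpace ℂ (Fin n)} :
    z ∈ Tube Ω ↔ reP z ∈ Ω := Iff.rfl

lemma mkP_reP_imP (z : EuclideanSpace ℂ (Fin n)) : mkP (reP z) (imP z) = z := rfl

lemma reP_mkP (x y : EuclideanSpace ℝ (Fin n)) : reP (mkP x y) = x := rfl

lemma imP_mkP (x y : EuclideanSpace ℝ (Fin n)) : imP (mkP x y) = y := rfl

lemma reP_add_smul (p v : EuclideanSpace ℂ (Fin n)) (t : ℂ) :
    reP (p + t • v) = reP p + t.re • reP v - t.im • imP v := by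
  ext i
  simp [reP, imP, Complex.mul_re]
  ring

lemma reP_sub (z w : EuclideanSpace ℂ (Fin n)) : reP (z - w) = reP z - reP w := by
  ext i; simp [reP]

lemma norm_sq_eq (z : EuclideanSpace ℂ (Fin n)) : ‖z‖^2 = ‖reP z‖^2 + ‖imP z‖^2 := by
  rw [EuclideanSpace.norm_eq z, EuclideanSpace.norm_eq (reP z), EuclideanSpace.norm_eq (imP z),
    Real.sq_sqrt (by positivity), Real.sq_sqrt (by positivity), Real.sq_sqrt (by positivity),
    ← Finset.sum_add_distrib]
  congr 1; funext i
  simp [reP, imP, Complex.sq_norm, Complex.normSq_apply, sq_abs]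
  ring

lemma norm_reP_le (z : EuclideanSpace ℂ (Fin n)) : ‖reP z‖ ≤ ‖z‖ := by
  have h := norm_sq_eq z
  nlinarith [norm_nonneg z, norm_nonneg (reP z), sq_nonneg ‖imP z‖]

lemma dist_mkP (x x' y : EuclideanSpace ℝ (Fin n)) : dist (mkP x y) (mkP x' y) = dist x x' := by
  rw [dist_eq_norm, dist_eq_norm, EuclideanSpace.norm_eq, EuclideanSpace.norm_eq]
  congr 1
  apply Finset.sum_congr rfl
  intro i _
  congr 1
  have : (mkP x y - mkP x' y) i = ((x i - x' i : ℝ) : ℂ) := by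
    apply Complex.ext <;> simp [mkP]
  rw [this, Complex.norm_real]
  rfl

lemma norm_mkP0 (x : EuclideanSpace ℝ (Fin n)) : ‖mkP x 0‖ = ‖x‖ := by
  have h := dist_mkP x 0 (0 : EuclideanSpace ℝ (Fin n))
  have h0 : mkP (0 : EuclideanSpace ℝ (Fin n)) 0 = 0 := rfl
  rw [h0] at h
  rw [← dist_zero_right, ← dist_zero_right]
  exact h

lemma dist_reP_le (z w : EuclideanSpace ℂ (Fin n)) : dist (reP z) (reP w) ≤ dist z w := by
  rw [dist_eq_norm, dist_eq_norm, ← reP_sub]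
  exact norm_reP_le _

lemma infDist_reP {S : Set (EuclideanSpace ℝ (Fin n))} (hS : S.Nonempty)
    (z : EuclideanSpace ℂ (Fin n)) :
    Metric.infDist z {w | reP w ∈ S} = Metric.infDist (reP z) S := by
  have hpre : {w : EuclideanSpace ℂ (Fin n) | reP w ∈ S}.Nonempty := by
    obtain ⟨x, hx⟩ := hS
    exact ⟨mkP x 0, by simpa [Set.mem_setOf_eq, reP_mkP] using hx⟩
  apply le_antisymm
  · apply le_of_forall_pos_le_add
    intro ε hε
    obtain ⟨y, hy, hdy⟩ := (Metric.infDist_lt_iff hS).1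
      (lt_add_of_pos_right (Metric.infDist (reP z) S) hε)
    have hmem : mkP y (imP z) ∈ {w : EuclideanSpace ℂ (Fin n) | reP w ∈ S} := hy
    calc Metric.infDist z {w | reP w ∈ S} ≤ dist z (mkP y (imP z)) :=
          Metric.infDist_le_dist_of_mem hmem
      _ = dist (reP z) y := by
          conv_lhs => rw [← mkP_reP_imP z]
          exact dist_mkP _ _ _
      _ ≤ Metric.infDist (reP z) S + ε := hdy.le
  · apply le_of_forall_pos_le_add
    intro ε hε
    obtain ⟨w, hw, hdw⟩ := (Metric.infDist_lt_iff hpre).1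
      (lt_add_of_pos_right (Metric.infDist z {w | reP w ∈ S}) hε)
    calc Metric.infDist (reP z) S ≤ dist (reP z) (reP w) :=
          Metric.infDist_le_dist_of_mem hw
      _ ≤ dist z w := dist_reP_le _ _
      _ ≤ Metric.infDist z {w | reP w ∈ S} + ε := hdw.le

lemma tube_compl (Ω : Set (EuclideanSpace ℝ (Fin n))) :
    (Tube Ω)ᶜ = {w : EuclideanSpace ℂ (Fin n) | reP w ∈ Ωᶜ} := rfl

lemma deltaC_tube {Ω : Set (EuclideanSpace ℝ (Fin n))} (hΩc : Ωᶜ.Nonempty)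
    (p : EuclideanSpace ℂ (Fin n)) :
    deltaC (Tube Ω) p = deltaR Ω (reP p) := by
  show Metric.infDist p (Tube Ω)ᶜ = Metric.infDist (reP p) Ωᶜ
  rw [tube_compl]
  exact infDist_reP hΩc p

lemma line_invariant {E : Type*} [NormedAddCommGroup E] [NormedSpace ℝ E]
    {Ω : Set E} (hop : IsOpen Ω) (hconv : Convex ℝ Ω) {a w : E}
    (hline : ∀ s : ℝ, a + s • w ∈ Ω) {x : E} (hx : x ∈ Ω) (s : ℝ) :
    x + s • w ∈ Ω := by
  obtain ⟨r, hr, hball⟩ := Metric.isOpen_iff.1 hop x hx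
  have hden : 0 < ‖x - a‖ + r := by positivity
  set lam : ℝ := r / (2 * (‖x - a‖ + r)) with hlam
  have hlam0 : 0 < lam := by positivity
  have hkey : lam * (‖x - a‖ + r) = r / 2 := by
    rw [hlam]; field_simp
  have hlam2 : lam ≤ 1/2 := by nlinarith [norm_nonneg (x - a)]
  have hlam1 : lam < 1 := by linarith
  have hl1 : (1:ℝ) - lam ≠ 0 := by linarith
  set x' : E := x + (lam/(1-lam)) • (x - a) with hx'
  have hx'mem : x' ∈ Ω := by
    apply hball
    rw [Metric.mem_ball, dist_eq_norm]
    have h1 : x' - x = (lam/(1-lam)) • (x - a) := by rw [hx']; abel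
    have hpos : (0:ℝ) < lam/(1-lam) := div_pos hlam0 (by linarith)
    rw [h1, norm_smul, Real.norm_eq_abs, abs_of_pos hpos]
    have h2 : lam/(1-lam) ≤ 2*lam := by
      rw [div_le_iff₀ (by linarith)]; nlinarith
    have h3 : 2*lam * ‖x - a‖ < r := by nlinarith [norm_nonneg (x - a)]
    calc lam/(1-lam) * ‖x - a‖ ≤ 2*lam * ‖x - a‖ :=
          mul_le_mul_of_nonneg_right h2 (norm_nonneg _)
      _ < r := h3
  have key : x + s • w = (1 - lam) • x' + lam • (a + (s/lam) • w) := by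
    rw [hx']
    match_scalars <;> field_simp <;> ring
  rw [key]
  exact hconv hx'mem (hline (s/lam)) (by linarith) (le_of_lt hlam0) (by ring)

lemma forward_core {Ω : Set (EuclideanSpace ℝ (Fin n))}
    (hop : IsOpen Ω) (hconv : Convex ℝ Ω)
    {p v : EuclideanSpace ℂ (Fin n)} (hp : reP p ∈ Ω)
    {w w' : EuclideanSpace ℝ (Fin n)}
    (hvw : ‖v‖ ≤ 2 * ‖w‖) (hw'w : ‖w'‖ ≤ ‖w‖)
    (hrep : ∀ s : ℝ, ∃ t : ℂ, ‖t‖ = |s| ∧ reP (p + t • v) = reP p + s • w)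
    (hrep' : ∀ s : ℝ, ∃ t : ℂ, ‖t‖ = |s| ∧ reP (p + t • v) = reP p + s • w')
    (hdec : ∀ t : ℂ, ∃ a b : ℝ, reP (p + t • v) = reP p + a • w + b • w')
    {K : ℝ} (hK : 0 ≤ K)
    (hbound : ∀ u : EuclideanSpace ℝ (Fin n), u ≠ 0 → deltaRLine Ω (reP p) u ≤ K) :
    deltaCLine (Tube Ω) p v ≤ 2 * K := by
  set A := {d | ∃ t : ℂ, p + t • v ∉ Tube Ω ∧ d = ‖t • v‖} with hAdef
  have hAset : deltaCLine (Tube Ω) p v = sInf A := rfl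
  have hbddA : BddBelow A := ⟨0, by rintro d ⟨t, _, rfl⟩; positivity⟩
  by_cases hA : A.Nonempty
  swap
  · rw [hAset, Set.not_nonempty_iff_eq_empty.1 hA, Real.sInf_empty]
    positivity
  obtain ⟨d₀, t₀, ht₀, hd₀⟩ := hA
  have hw0 : 0 < ‖w‖ := by
    rcases lt_or_ge 0 ‖w‖ with h | h
    · exact h
    · exfalso
      have hv0 : v = 0 := norm_le_zero_iff.1 (by linarith)
      apply ht₀
      rw [hv0]
      have : p + t₀ • (0 : EuclideanSpace ℂ (Fin n)) = p := by simp
      rw [this]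
      exact hp
  have hwne : w ≠ 0 := fun h => by rw [h, norm_zero] at hw0; exact lt_irrefl 0 hw0
  rw [hAset]
  apply le_of_forall_pos_le_add
  intro ε hε
  by_cases hBw : ∃ s : ℝ, reP p + s • w ∉ Ω
  · -- the big direction exits Ω
    set B := {d | ∃ s : ℝ, reP p + s • w ∉ Ω ∧ d = ‖s • w‖} with hBdef
    have hBne : B.Nonempty := by
      obtain ⟨s, hs⟩ := hBw
      exact ⟨‖s • w‖, s, hs, rfl⟩
    have hB : sInf B ≤ K := hbound w hwne
    obtain ⟨β, hβB, hβ⟩ := Real.lt_sInf_add_pos hBne (half_pos hε)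
    obtain ⟨s, hs, rfl⟩ := hβB
    obtain ⟨t, htn, htr⟩ := hrep s
    have hmemA : ‖t • v‖ ∈ A := by
      refine ⟨t, ?_, rfl⟩
      intro hmem
      apply hs
      rw [← htr]
      exact hmem
    have h1 : sInf A ≤ ‖t • v‖ := csInf_le hbddA hmemA
    have h2 : ‖t • v‖ ≤ 2 * ‖s • w‖ := by
      rw [norm_smul, norm_smul, htn, Real.norm_eq_abs]
      calc |s| * ‖v‖ ≤ |s| * (2 * ‖w‖) := mul_le_mul_of_nonneg_left hvw (abs_nonneg s)
        _ = 2 * (|s| * ‖w‖) := by ring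
    linarith
  · -- the whole line in the big direction stays in Ω
    push_neg at hBw
    have trans : ∀ (x : EuclideanSpace ℝ (Fin n)), x ∈ Ω → ∀ c : ℝ, x + c • w ∈ Ω :=
      fun x hx c => line_invariant hop hconv hBw hx c
    have hK1 : (0:ℝ) < K + 1 := by linarith
    set η := min (ε/(4*(K+1))) (1/2) with hηdef
    have hη0 : 0 < η := lt_min (by positivity) (by norm_num)
    have hη1 : η ≤ ε/(4*(K+1)) := min_le_left _ _
    have hη2 : η ≤ 1/2 := min_le_right _ _
    set u := w + η • w' with hudef
    have hwu : ‖w‖ ≤ 2 * ‖u‖ := by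
      have h1 : w = u - η • w' := by rw [hudef]; abel
      have h2 : ‖w‖ ≤ ‖u‖ + ‖η • w'‖ := by
        rw [h1]; exact norm_sub_le _ _
      have h3 : ‖η • w'‖ ≤ (1/2) * ‖w‖ := by
        rw [norm_smul, Real.norm_eq_abs, abs_of_pos hη0]
        calc η * ‖w'‖ ≤ (1/2) * ‖w'‖ := mul_le_mul_of_nonneg_right hη2 (norm_nonneg _)
          _ ≤ (1/2) * ‖w‖ := by linarith
      linarith
    have hune : u ≠ 0 := by
      intro h
      rw [h, norm_zero] at hwu
      linarith
    set Bu := {d | ∃ s : ℝ, reP p + s • u ∉ Ω ∧ d = ‖s • u‖} with hBudef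
    have hBu : sInf Bu ≤ K := hbound u hune
    obtain ⟨a₀, b₀, hab⟩ := hdec t₀
    have hq : reP p + a₀ • w + b₀ • w' ∉ Ω := by
      rw [← hab]
      exact ht₀
    have hBuwit : reP p + (b₀/η) • u ∉ Ω := by
      intro hmem
      apply hq
      have h2 := trans _ hmem (a₀ - b₀/η)
      have heq : reP p + a₀ • w + b₀ • w' = reP p + (b₀/η) • u + (a₀ - b₀/η) • w := by
        rw [hudef]
        match_scalars
        · ring
        · field_simp; ring
        · field_simp
      rw [heq]
      exact h2
    have hBune : Bu.Nonempty := ⟨‖(b₀/η) • u‖, b₀/η, hBuwit, rfl⟩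
    obtain ⟨β, hβB, hβ⟩ := Real.lt_sInf_add_pos hBune one_pos
    obtain ⟨s, hsu, rfl⟩ := hβB
    have hsw' : reP p + (s*η) • w' ∉ Ω := by
      intro hmem
      apply hsu
      have h2 := trans _ hmem s
      have heq : reP p + s • u = reP p + (s*η) • w' + s • w := by
        rw [hudef]
        module
      rw [heq]
      exact h2
    obtain ⟨t, htn, htr⟩ := hrep' (s*η)
    have hmemA : ‖t • v‖ ∈ A := by
      refine ⟨t, ?_, rfl⟩
      intro hmem
      apply hsw'
      rw [← htr]
      exact hmem
    have h1 : sInf A ≤ ‖t • v‖ := csInf_le hbddA hmemA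
    have hβval : |s| * ‖u‖ < K + 1 := by
      rw [norm_smul, Real.norm_eq_abs] at hβ
      linarith
    have h2 : ‖t • v‖ ≤ ε := by
      rw [norm_smul, htn, abs_mul, abs_of_pos hη0]
      have e1 : |s| * η * ‖v‖ ≤ |s| * η * (2 * ‖w‖) :=
        mul_le_mul_of_nonneg_left hvw (by positivity)
      have e2 : |s| * η * (2 * ‖w‖) ≤ |s| * η * (2 * (2 * ‖u‖)) :=
        mul_le_mul_of_nonneg_left (by linarith) (by positivity)
      have e3 : |s| * η * (2 * (2 * ‖u‖)) = 4 * η * (|s| * ‖u‖) := by ring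
      have e4 : 4 * η * (|s| * ‖u‖) ≤ 4 * η * (K+1) :=
        mul_le_mul_of_nonneg_left hβval.le (by positivity)
      have e5 : 4 * η * (K+1) ≤ ε := by
        rw [le_div_iff₀ (by positivity : (0:ℝ) < 4*(K+1))] at hη1
        linarith
      calc |s| * η * ‖v‖ ≤ |s| * η * (2 * ‖w‖) := e1
        _ ≤ |s| * η * (2 * (2 * ‖u‖)) := e2
        _ = 4 * η * (|s| * ‖u‖) := e3
        _ ≤ 4 * η * (K+1) := e4
        _ ≤ ε := e5
    linarith

end Stmt18Aux

open Stmt18Aux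

theorem stmt_18 {n : ℕ} (Ω : Set (EuclideanSpace ℝ (Fin n)))
    (hΩopen : IsOpen Ω) (hΩconv : Convex ℝ Ω) (hΩne : Ω.Nonempty)
    (hΩproper : Ω ≠ Set.univ) (m : ℝ) (hm : 1 ≤ m) :
    LocallyMConvexC (Tube Ω) m ↔ LocallyMConvexR Ω m := by
  have hΩc : Ωᶜ.Nonempty := Set.nonempty_compl.2 hΩproper
  constructor
  · -- tube m-convex → Ω m-convex
    intro h R hR
    obtain ⟨C, hC, hCprop⟩ := h R hR
    refine ⟨C, hC, ?_⟩
    intro p hp hpR v hv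
    have hpT : mkP p 0 ∈ Tube Ω := hp
    have hnp : ‖mkP p (0 : EuclideanSpace ℝ (Fin n))‖ = ‖p‖ := norm_mkP0 p
    have hnv : ‖mkP v (0 : EuclideanSpace ℝ (Fin n))‖ = ‖v‖ := norm_mkP0 v
    have hvC : mkP v 0 ≠ 0 := by
      intro hzero
      apply hv
      have : v = reP (mkP v (0 : EuclideanSpace ℝ (Fin n))) := rfl
      rw [this, hzero]
      rfl
    have hkey := hCprop (mkP p 0) hpT (by rw [hnp]; exact hpR) (mkP v 0) hvC
    have hδ : deltaC (Tube Ω) (mkP p 0) = deltaR Ω p := deltaC_tube hΩc _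
    have hco : ∀ t : ℂ, reP (mkP p 0 + t • mkP v 0) = p + t.re • v := by
      intro t
      rw [reP_add_smul, reP_mkP, reP_mkP, imP_mkP, smul_zero, sub_zero]
    set A := {d | ∃ t : ℂ, mkP p 0 + t • mkP v 0 ∉ Tube Ω ∧ d = ‖t • mkP v 0‖} with hAdef
    set B := {d | ∃ t : ℝ, p + t • v ∉ Ω ∧ d = ‖t • v‖} with hBdef
    have hBbdd : BddBelow B := ⟨0, by rintro d ⟨t, _, rfl⟩; positivity⟩
    by_cases hB : B.Nonempty
    swap
    · have : deltaRLine Ω p v = 0 := by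
        show sInf B = 0
        rw [Set.not_nonempty_iff_eq_empty.1 hB, Real.sInf_empty]
      rw [this]
      have : (0:ℝ) ≤ deltaR Ω p := Metric.infDist_nonneg
      positivity
    · have hAne : A.Nonempty := by
        obtain ⟨d, s, hs, hd⟩ := hB
        refine ⟨‖(s:ℂ) • mkP v 0‖, (s:ℂ), ?_, rfl⟩
        intro hmem
        apply hs
        have := hco (s:ℂ)
        rw [mem_tube, this] at hmem
        simpa using hmem
      have hle : deltaRLine Ω p v ≤ deltaCLine (Tube Ω) (mkP p 0) (mkP v 0) := by
        show sInf B ≤ sInf A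
        apply le_csInf hAne
        rintro d ⟨t, htm, rfl⟩
        have hw : p + t.re • v ∉ Ω := by
          intro hmem
          apply htm
          rw [mem_tube, hco]
          exact hmem
        have hmemB : ‖t.re • v‖ ∈ B := ⟨t.re, hw, rfl⟩
        calc sInf B ≤ ‖t.re • v‖ := csInf_le hBbdd hmemB
          _ ≤ ‖t • mkP v 0‖ := by
              rw [norm_smul, norm_smul, hnv, Real.norm_eq_abs]
              apply mul_le_mul_of_nonneg_right _ (norm_nonneg v)
              exact Complex.abs_re_le_norm t
      calc deltaRLine Ω p v ≤ deltaCLine (Tube Ω) (mkP p 0) (mkP v 0) := hle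
        _ ≤ C * (deltaC (Tube Ω) (mkP p 0)) ^ (1/m) := hkey
        _ = C * (deltaR Ω p) ^ (1/m) := by rw [hδ]
  · -- Ω m-convex → tube m-convex
    intro h R hR
    obtain ⟨C, hC, hCprop⟩ := h R hR
    refine ⟨2*C, by linarith, ?_⟩
    intro p hp hpR v hv
    have hpmem : reP p ∈ Ω := hp
    have hpR' : ‖reP p‖ < R := lt_of_le_of_lt (norm_reP_le p) hpR
    have hδ : deltaC (Tube Ω) p = deltaR Ω (reP p) := deltaC_tube hΩc p
    set K := C * (deltaR Ω (reP p)) ^ (1/m) with hKdef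
    have hdR0 : (0:ℝ) ≤ deltaR Ω (reP p) := Metric.infDist_nonneg
    have hK0 : 0 ≤ K := by positivity
    have hbound : ∀ u : EuclideanSpace ℝ (Fin n), u ≠ 0 → deltaRLine Ω (reP p) u ≤ K :=
      fun u hu => hCprop (reP p) hpmem hpR' u hu
    have hvsq := norm_sq_eq v
    have hgoal : deltaCLine (Tube Ω) p v ≤ 2 * K := by
      rcases le_total ‖imP v‖ ‖reP v‖ with hcase | hcase
      · -- w = reP v
        have hvw : ‖v‖ ≤ 2 * ‖reP v‖ := by
          nlinarith [norm_nonneg v, norm_nonneg (reP v), norm_nonneg (imP v)]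
        refine forward_core hΩopen hΩconv hpmem hvw hcase ?_ ?_ ?_ hK0 hbound
        · intro s
          refine ⟨(s:ℂ), by simp, ?_⟩
          rw [reP_add_smul]
          simp
        · intro s
          refine ⟨⟨0, -s⟩, ?_, ?_⟩
          · have : (⟨0, -s⟩ : ℂ) = (-s : ℝ) * Complex.I := by
              apply Complex.ext <;> simp
            rw [this]; simp
          · rw [reP_add_smul]
            show reP p + (0:ℝ) • reP v - (-s) • imP v = reP p + s • imP v
            module
        · intro t
          refine ⟨t.re, -t.im, ?_⟩
          rw [reP_add_smul]
          module
      · -- w = imP v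
        have hvw : ‖v‖ ≤ 2 * ‖imP v‖ := by
          nlinarith [norm_nonneg v, norm_nonneg (reP v), norm_nonneg (imP v)]
        refine forward_core hΩopen hΩconv hpmem hvw hcase ?_ ?_ ?_ hK0 hbound
        · intro s
          refine ⟨⟨0, -s⟩, ?_, ?_⟩
          · have : (⟨0, -s⟩ : ℂ) = (-s : ℝ) * Complex.I := by
              apply Complex.ext <;> simp
            rw [this]; simp
          · rw [reP_add_smul]
            show reP p + (0:ℝ) • reP v - (-s) • imP v = reP p + s • imP v
            module
        · intro s
          refine ⟨(s:ℂ), by simp, ?_⟩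
          rw [reP_add_smul]
          simp
        · intro t
          refine ⟨-t.im, t.re, ?_⟩
          rw [reP_add_smul]
          module
    calc deltaCLine (Tube Ω) p v ≤ 2 * K := hgoal
      _ = 2*C * (deltaC (Tube Ω) p) ^ (1/m) := by rw [hδ, hKdef]; ring

end
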